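/- arXiv:1404.5782 — 4 statements merged into one kernel-verified Lean document; each statement's English description precedes it below -/
import Mathlib

section
/- Let D be a strong digraph of order n = 2m+1 ≥ 5 that contains no cycle passing through all of its T-vertices, let C = x_1x_2…x_{n−1}x_1 be a cycle of length n−1 in D, let x be the unique vertex of D not on C, and suppose x and x_{n−1} are not adjacent; write y = x_{n−1} and p = n−2. Let x_{l_1}, x_{l_2}, …, x_{l_r} with 2 ≤ l_1 < l_2 < … < l_r ≤ p−1 be vertices each of which is adjacent to neither x nor y. Then the set {x, y, x_{l_1}, x_{l_2}, …, x_{l_r}} is an independent set of vertices of D. -/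
/-!
Basic framework: finite loopless digraphs (arcs may exist in both directions),
degrees, adjacency, directed cycles (as injective maps from `ZMod k` respecting
arcs), strong and 2-strong connectivity, T-vertices, and the special digraphs
`D₅`, `D₇`, the classes `L₁`, `L₂`, etc. from the paper
"On Cycles through Vertices of Large Semidegree in Digraphs".
-/

/-- A digraph: a loopless arc relation (arcs `u → v`; both `uv` and `vu` allowed). -/
structure Dgr (V : Type*) where
  Arc : V → V → Prop
  loopless : ∀ v, ¬ Arc v v

namespace Dgr

variable {V : Type*}

/-- Two vertices are adjacent if there is an arc between them in some direction. -/
def Adj (D : Dgr V) (u v : V) : Prop := D.Arc u v ∨ D.Arc v u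

/-- Out-degree `d⁺(u)`. -/
noncomputable def outDeg (D : Dgr V) (u : V) : ℕ := {v | D.Arc u v}.ncard

/-- In-degree `d⁻(u)`. -/
noncomputable def inDeg (D : Dgr V) (u : V) : ℕ := {v | D.Arc v u}.ncard

/-- Degree `d(u) = d⁺(u) + d⁻(u)`. -/
noncomputable def deg (D : Dgr V) (u : V) : ℕ := D.outDeg u + D.inDeg u

/-- `d⁺(u, A)`: number of out-neighbours of `u` in `A`. -/
noncomputable def outDegOn (D : Dgr V) (u : V) (A : Set V) : ℕ := {v ∈ A | D.Arc u v}.ncard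

/-- `d⁻(u, A)`: number of in-neighbours of `u` in `A`. -/
noncomputable def inDegOn (D : Dgr V) (u : V) (A : Set V) : ℕ := {v ∈ A | D.Arc v u}.ncard

/-- `d(u, A) = d⁺(u, A) + d⁻(u, A)`. -/
noncomputable def degOn (D : Dgr V) (u : V) (A : Set V) : ℕ := D.outDegOn u A + D.inDegOn u A

/-- In a digraph of order `2m+1`, a `T`-vertex is one with `d⁺(u) ≥ m` and `d⁻(u) ≥ m`. -/
def TVertex (D : Dgr V) (m : ℕ) (u : V) : Prop := m ≤ D.outDeg u ∧ m ≤ D.inDeg u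

/-- A directed cycle of length `k ≥ 2`, given as an injective map `c : ZMod k → V`
with an arc from each `c i` to `c (i+1)`. -/
def IsCycle (D : Dgr V) {k : ℕ} (c : ZMod k → V) : Prop :=
  2 ≤ k ∧ Function.Injective c ∧ ∀ i, D.Arc (c i) (c (i + 1))

/-- `D` has a (directed) cycle through all vertices of `S`. -/
def CycleThrough (D : Dgr V) (S : Set V) : Prop :=
  ∃ (k : ℕ) (c : ZMod k → V), D.IsCycle c ∧ S ⊆ Set.range c

/-- A Hamiltonian cycle: a cycle through all the vertices. -/
def Hamiltonian (D : Dgr V) [Fintype V] : Prop :=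
  ∃ c : ZMod (Fintype.card V) → V, D.IsCycle c ∧ Function.Surjective c

/-- `D` is strong: a directed path (walk) from `u` to `v` for every pair of
distinct vertices. -/
def Strong (D : Dgr V) : Prop :=
  ∀ u v : V, u ≠ v → Relation.TransGen D.Arc u v

/-- The induced subdigraph on a set `S` of vertices. -/
def restrict (D : Dgr V) (S : Set V) : Dgr S where
  Arc a b := D.Arc a b
  loopless v := D.loopless v

/-- `D` is 2-strong: at least 3 vertices, and deleting any single vertex leaves
a strong digraph. -/
def TwoStrong (D : Dgr V) [Fintype V] : Prop :=
  3 ≤ Fintype.card V ∧ ∀ w : V, (D.restrict {v | v ≠ w}).Strong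

/-- Isomorphism of digraphs. -/
def Iso (D : Dgr V) {W : Type*} (E : Dgr W) : Prop :=
  ∃ e : V ≃ W, ∀ a b : V, D.Arc a b ↔ E.Arc (e a) (e b)

end Dgr

/-- A digraph defined by a list of arcs. -/
def ofList {V : Type*} [DecidableEq V] (l : List (V × V)) (h : ∀ v : V, (v, v) ∉ l) :
    Dgr V where
  Arc a b := (a, b) ∈ l
  loopless v hv := h v hv

/-- Arcs of the digraph `D₅` (vertices `x₁,x₂,x₃ = 0,1,2`, `x = 3`, `y = 4`):
`N⁺(x₁)={x₂,y}`, `N⁺(x₂)={x₃,x}`, `N⁺(x₃)={x,y}`, `N⁺(x)={x₁,x₂}`, `N⁺(y)={x₁,x₃}`. -/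
def D5arcs : List (Fin 5 × Fin 5) :=
  [(0,1),(0,4),(1,2),(1,3),(2,3),(2,4),(3,0),(3,1),(4,0),(4,2)]

/-- The digraph `D₅`. -/
def D5 : Dgr (Fin 5) := ofList D5arcs (by decide)

/-- `L₁`: the three digraphs obtained from `D₅` by adding the arc `x₁x₃`, the arc
`x₃x₁`, or both. -/
def L1 : Set (Dgr (Fin 5)) :=
  {ofList ((0,2) :: D5arcs) (by decide),
   ofList ((2,0) :: D5arcs) (by decide),
   ofList ((0,2) :: (2,0) :: D5arcs) (by decide)}

/-- Arcs of the digraph `D₇` (vertices `x₁,…,x₅ = 0,…,4`, `x = 5`, `y = 6`):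
`N⁺(x₁)={x₂,x₅,y}`, `N⁺(x₂)={x₃,x₄,y}`, `N⁺(x₃)={x₂,x₄,x}`, `N⁺(x₄)={x₃,x₅,x}`,
`N⁺(x₅)={x₁,x,y}`, `N⁺(x)={x₁,x₂,x₃}`, `N⁺(y)={x₁,x₄,x₅}`. -/
def D7arcs : List (Fin 7 × Fin 7) :=
  [(0,1),(0,4),(0,6),(1,2),(1,3),(1,6),(2,1),(2,3),(2,5),(3,2),(3,4),(3,5),
   (4,0),(4,5),(4,6),(5,0),(5,1),(5,2),(6,0),(6,3),(6,4)]

/-- The digraph `D₇`. -/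
def D7 : Dgr (Fin 7) := ofList D7arcs (by decide)

/-- Membership in the class `L₂`: there is an enumeration `x_1,…,x_{2m}, x` of the
vertices (here `b i = x_i`, indices mod `2m`, so `b 0 = x_{2m}`) such that
`x_1x_2⋯x_{2m}x_1` is a cycle, `x` and `x_{2m}` are nonadjacent,
`N⁺(x) = N⁺(x_{2m}) = {x_1,…,x_m}`, `N⁻(x) = N⁻(x_{2m}) = {x_m,…,x_{2m-1}}`,
and there is no arc from `{x_1,…,x_{m-1}}` to `{x_{m+1},…,x_{2m-1}}`. -/
def InL2 {V : Type*} (D : Dgr V) (m : ℕ) : Prop :=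
  ∃ (b : ZMod (2 * m) → V) (x : V),
    1 ≤ m ∧
    Function.Injective b ∧ x ∉ Set.range b ∧
    (∀ i, D.Arc (b i) (b (i + 1))) ∧
    ¬ D.Adj x (b 0) ∧
    {v | D.Arc x v} = (fun i : ℕ => b i) '' Set.Icc 1 m ∧
    {v | D.Arc (b 0) v} = (fun i : ℕ => b i) '' Set.Icc 1 m ∧
    {v | D.Arc v x} = (fun i : ℕ => b i) '' Set.Icc m (2 * m - 1) ∧
    {v | D.Arc v (b 0)} = (fun i : ℕ => b i) '' Set.Icc m (2 * m - 1) ∧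
    (∀ i ∈ Set.Icc 1 (m - 1), ∀ j ∈ Set.Icc (m + 1) (2 * m - 1),
      ¬ D.Arc (b (i : ℕ)) (b (j : ℕ)))

/-- `K*_{m,m+1} ⊆ D ⊆ [K_m + K̄_{m+1}]*` (containments as spanning subdigraphs):
the vertex set splits into `A` of size `m` and its complement of size `m+1`, all arcs
between `A` and `Aᶜ` are present in both directions, and there are no arcs inside `Aᶜ`. -/
def KSandwich {V : Type*} (D : Dgr V) (m : ℕ) : Prop :=
  ∃ A : Set V, A.ncard = m ∧ Aᶜ.ncard = m + 1 ∧
    (∀ a ∈ A, ∀ b ∈ Aᶜ, D.Arc a b ∧ D.Arc b a) ∧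
    (∀ u ∈ Aᶜ, ∀ v ∈ Aᶜ, ¬ D.Arc u v)

/-- Alternative (iv) of Theorem 2: `D` has a cycle `C = z_1 z_2 ⋯ z_{2m} z_1` of length
`2m` such that, with `z` the vertex off the cycle, at least `3` vertices of the cycle
are nonadjacent to `z`, and every cycle vertex `z_l` nonadjacent to `z` satisfies
`z_{l-1}z, z z_{l+1} ∈ A(D)`, `N⁺(z) = N⁺(z_l)` and `N⁻(z) = N⁻(z_l)`; in particular
these vertices together with `z` form an independent set. -/
def PropIV {V : Type*} (D : Dgr V) (m : ℕ) : Prop :=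
  ∃ (c : ZMod (2 * m) → V) (z : V),
    D.IsCycle c ∧ z ∉ Set.range c ∧
    3 ≤ {i : ZMod (2 * m) | ¬ D.Adj z (c i)}.ncard ∧
    (∀ i : ZMod (2 * m), ¬ D.Adj z (c i) →
      D.Arc (c (i - 1)) z ∧ D.Arc z (c (i + 1)) ∧
      {v | D.Arc z v} = {v | D.Arc (c i) v} ∧
      {v | D.Arc v z} = {v | D.Arc v (c i)}) ∧
    (insert z (c '' {i | ¬ D.Adj z (c i)})).Pairwise (fun a b => ¬ D.Adj a b)

namespace Rem2
open Dgr

variable {V : Type*} {D : Dgr V}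

theorem cycleThrough_of_list (D : Dgr V) (L : List V) (h2 : 2 ≤ L.length)
    (nd : L.Nodup) (ch : L.Chain' D.Arc)
    (cl : ∀ u ∈ L.getLast?, ∀ v ∈ L.head?, D.Arc u v)
    (S : Set V) (hS : ∀ v ∈ S, v ∈ L) : D.CycleThrough S := by
  haveI : NeZero L.length := ⟨by omega⟩
  refine ⟨L.length, fun i => L.get ⟨i.val, i.val_lt⟩, ⟨h2, ?_, ?_⟩, ?_⟩
  · intro i j hij
    have := (nd.get_inj_iff).1 hij
    have : i.val = j.val := congrArg Fin.val this
    exact ZMod.val_injective _ this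
  · intro i
    show D.Arc (L.get ⟨i.val, i.val_lt⟩) (L.get ⟨(i+1).val, (i+1).val_lt⟩)
    haveI : Fact (1 < L.length) := ⟨by omega⟩
    have hv : (i + 1).val = (i.val + 1) % L.length := by
      rw [ZMod.val_add, ZMod.val_one]
    rcases lt_or_ge (i.val + 1) L.length with h | h
    · have : (i+1).val = i.val + 1 := by rw [hv, Nat.mod_eq_of_lt h]
      have harc := List.isChain_iff_getElem.1 ch i.val (by omega)
      have h' : (⟨(i+1).val, (i+1).val_lt⟩ : Fin L.length) = ⟨i.val+1, by omega⟩ := Fin.ext this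
      rw [h']
      exact harc
    · have hiv : i.val = L.length - 1 := by have := i.val_lt; omega
      have h0 : (i+1).val = 0 := by rw [hv]; rw [hiv]; simp [Nat.sub_add_cancel (by omega : 1 ≤ L.length)]
      have hne : L ≠ [] := by intro h; simp [h] at h2
      have hlast : L.get ⟨i.val, i.val_lt⟩ = L.getLast hne := by
        rw [List.getLast_eq_getElem]; simp [hiv]
      have hhead : L.get ⟨(i+1).val, (i+1).val_lt⟩ = L.head hne := by
        have h' : (⟨(i+1).val, (i+1).val_lt⟩ : Fin L.length) = ⟨0, by omega⟩ := Fin.ext h0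
        rw [h']
        simp only [List.get_eq_getElem]
        exact (List.head_eq_getElem_zero hne).symm
      rw [hlast, hhead]
      exact cl _ (List.getLast?_eq_getLast_of_ne_nil hne ▸ rfl) _ ((List.head?_eq_head hne) ▸ rfl)
  · rintro v hv
    obtain ⟨⟨n, hn⟩, hget⟩ := List.mem_iff_get.1 (hS v hv)
    refine ⟨(n : ZMod L.length), ?_⟩
    have : ((n : ZMod L.length)).val = n := ZMod.val_natCast_of_lt hn
    simp only [this]
    exact hget.symm ▸ rfl

theorem chain'_seg (R : V → V → Prop) (g : ℕ → V) (hg : ∀ i, R (g i) (g (i+1))) :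
    ∀ (n a : ℕ), List.Chain' R ((List.range' a n).map g) := by
  intro n
  induction n with
  | zero => intro a; exact List.isChain_nil
  | succ n ih =>
    intro a
    rw [List.range'_succ]
    cases n with
    | zero => exact List.isChain_singleton _
    | succ n =>
      rw [List.map_cons]
      refine List.IsChain.cons (ih (a+1)) ?_
      intro y hy
      rw [List.range'_succ, List.map_cons, List.head?_cons, Option.mem_some_iff] at hy
      subst hy; exact hg a

theorem head?_seg (g : ℕ → V) (a n : ℕ) (hn : 1 ≤ n) :
    ((List.range' a n).map g).head? = some (g a) := by
  cases n with
  | zero => omega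
  | succ n => rw [List.range'_succ, List.map_cons, List.head?_cons]

theorem getLast?_seg (g : ℕ → V) (a n : ℕ) (hn : 1 ≤ n) :
    ((List.range' a n).map g).getLast? = some (g (a + n - 1)) := by
  cases n with
  | zero => omega
  | succ n =>
    rw [List.range'_concat, List.map_append, List.map_singleton, List.getLast?_concat]
    have : a + 1 * n = a + (n + 1) - 1 := by omega
    rw [this]

theorem chain'_segA {R : V → V → Prop} (g : ℕ → V) (hg : ∀ i, R (g i) (g (i+1)))
    (a n : ℕ) (hn : 1 ≤ n) (L : List V) (hL : List.Chain' R L)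
    (hbd : ∀ w ∈ L.head?, R (g (a+n-1)) w) :
    List.Chain' R ((List.range' a n).map g ++ L) := by
  refine List.isChain_append.2 ?_
  refine ⟨chain'_seg R g hg n a, hL, ?_⟩
  intro u hu v hv
  rw [getLast?_seg g a n hn, Option.mem_some_iff] at hu
  subst hu
  exact hbd v hv

theorem head?_segA (g : ℕ → V) (a n : ℕ) (hn : 1 ≤ n) (L : List V) :
    ((List.range' a n).map g ++ L).head? = some (g a) := by
  rw [List.head?_append, head?_seg g a n hn]
  rfl

theorem seg_ne_nil (g : ℕ → V) (a n : ℕ) (hn : 1 ≤ n) :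
    (List.range' a n).map g ≠ [] := by
  intro hh
  have h1 : ((List.range' a n).map g).length = n := by simp
  rw [hh] at h1
  simp at h1
  omega

theorem insert_cycle {k : ℕ} (c : ZMod k → V) (hc : D.IsCycle c) (z : V)
    (hz : z ∉ Set.range c) (i₀ : ZMod k) (h1 : D.Arc (c i₀) z) (h2 : D.Arc z (c (i₀ + 1)))
    (S : Set V) (hS : S ⊆ Set.range c ∪ {z}) : D.CycleThrough S := by
  obtain ⟨hk2, hinj, harc⟩ := hc
  haveI : NeZero k := ⟨by omega⟩
  set g : ℕ → V := fun t => c (i₀ + 1 + (t : ZMod k)) with hg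
  have hgarc : ∀ t, D.Arc (g t) (g (t+1)) := by
    intro t
    have : ((t+1 : ℕ) : ZMod k) = (t : ZMod k) + 1 := by push_cast; ring
    simp only [hg, this, ← add_assoc]
    exact harc _
  set L : List V := ((List.range' 0 k).map g) ++ [z] with hL
  apply cycleThrough_of_list D L (by simp [hL]; omega)
  · rw [hL, List.nodup_append]
    refine ⟨?_, List.nodup_singleton z, ?_⟩
    · refine List.Nodup.map_on ?_ (List.nodup_range' (s := 0) (n := k))
      intro t1 ht1 t2 ht2 heq
      rw [List.mem_range'] at ht1 ht2
      obtain ⟨j1, hj1, rfl⟩ := ht1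
      obtain ⟨j2, hj2, rfl⟩ := ht2
      have := hinj heq
      have : ((0 + 1*j1 : ℕ) : ZMod k) = ((0 + 1*j2 : ℕ) : ZMod k) := by
        have h' := add_left_cancel this
        exact h'
      have := congrArg ZMod.val this
      rwa [ZMod.val_natCast_of_lt (by omega), ZMod.val_natCast_of_lt (by omega)] at this
    · intro v hv w hw hvw
      simp only [List.mem_singleton] at hw
      subst hw
      subst hvw
      rw [List.mem_map] at hv
      obtain ⟨t, _, ht⟩ := hv
      exact hz ⟨_, ht⟩
  · rw [hL]; refine List.isChain_append.2 ?_
    refine ⟨chain'_seg _ g hgarc k 0, List.isChain_singleton z, ?_⟩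
    intro u hu v hv
    rw [getLast?_seg g 0 k (by omega), Option.mem_some_iff] at hu
    simp only [List.head?_cons, Option.mem_some_iff] at hv
    subst hu; subst hv
    have : g (0 + k - 1) = c i₀ := by
      simp only [hg]
      congr 1
      have hcast : ((0 + k - 1 : ℕ) : ZMod k) = (k : ZMod k) - 1 := by
        have : (0 + k - 1) + 1 = k := by omega
        have := congrArg (fun t : ℕ => (t : ZMod k)) this
        push_cast at this
        linear_combination this
      rw [hcast, ZMod.natCast_self]
      ring
    rw [this]
    exact h1
  · intro u hu v hv
    rw [hL, List.getLast?_concat, Option.mem_some_iff] at hu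
    subst hu
    rw [hL] at hv
    rw [List.head?_append, head?_seg g 0 k (by omega)] at hv
    simp only [Option.some_or, Option.mem_some_iff] at hv
    subst hv
    have : g 0 = c (i₀ + 1) := by simp [hg]
    rw [this]
    exact h2
  · intro v hv
    rcases hS hv with h | h
    · obtain ⟨i, rfl⟩ := h
      rw [hL, List.mem_append]
      left
      rw [List.mem_map]
      refine ⟨(i - (i₀ + 1)).val, ?_, ?_⟩
      · rw [List.mem_range']
        exact ⟨(i - (i₀+1)).val, ZMod.val_lt _, by omega⟩
      · simp only [hg, ZMod.natCast_val, ZMod.cast_id]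
        congr 1
        ring
    · simp only [Set.mem_singleton_iff] at h
      subst h
      simp [hL]

theorem counting [Fintype V] {k m : ℕ} (hk : k = 2*m) (hm : 1 ≤ m)
    (c : ZMod k → V) (hinj : Function.Injective c) (z : V)
    (huniv : Set.range c ∪ {z} = Set.univ)
    (hout : m ≤ D.outDeg z) (hin : m ≤ D.inDeg z)
    (hnoins : ∀ i, ¬(D.Arc (c i) z ∧ D.Arc z (c (i + 1)))) :
    ∀ i, (D.Arc (c i) z ↔ ¬ D.Arc z (c (i + 1))) := by
  classical
  haveI : NeZero k := ⟨by omega⟩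
  set A : Finset (ZMod k) := Finset.univ.filter (fun i => D.Arc z (c i)) with hA
  set B : Finset (ZMod k) := Finset.univ.filter (fun i => D.Arc (c i) z) with hB
  have hsubA : {v | D.Arc z v} = c '' {i | D.Arc z (c i)} := by
    ext v
    simp only [Set.mem_setOf_eq, Set.mem_image]
    constructor
    · intro hv
      have hvne : v ≠ z := fun h => D.loopless z (h ▸ hv)
      have : v ∈ Set.range c ∪ {z} := huniv ▸ Set.mem_univ v
      rcases this with ⟨i, rfl⟩ | h
      · exact ⟨i, hv, rfl⟩
      · exact absurd h hvne
    · rintro ⟨i, hi, rfl⟩; exact hi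
  have hsubB : {v | D.Arc v z} = c '' {i | D.Arc (c i) z} := by
    ext v
    simp only [Set.mem_setOf_eq, Set.mem_image]
    constructor
    · intro hv
      have hvne : v ≠ z := fun h => D.loopless z (h ▸ hv)
      have : v ∈ Set.range c ∪ {z} := huniv ▸ Set.mem_univ v
      rcases this with ⟨i, rfl⟩ | h
      · exact ⟨i, hv, rfl⟩
      · exact absurd h hvne
    · rintro ⟨i, hi, rfl⟩; exact hi
  have hcardA : D.outDeg z = A.card := by
    rw [outDeg, hsubA, Set.ncard_image_of_injective _ hinj,
      Set.ncard_eq_toFinset_card', Set.toFinset_setOf]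
  have hcardB : D.inDeg z = B.card := by
    rw [inDeg, hsubB, Set.ncard_image_of_injective _ hinj,
      Set.ncard_eq_toFinset_card', Set.toFinset_setOf]
  set f : ZMod k → ℕ := fun i =>
    (if D.Arc (c i) z then 1 else 0) + (if D.Arc z (c (i+1)) then 1 else 0) with hf
  have hsumf : k ≤ ∑ i, f i := by
    have h1 : ∑ i, (if D.Arc (c i) z then 1 else 0) = B.card := (Finset.card_filter _ _).symm
    have h2 : ∑ i : ZMod k, (if D.Arc z (c (i+1)) then (1:ℕ) else 0) = A.card := by
      rw [hA, Finset.card_filter]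
      exact Fintype.sum_bijective (fun i : ZMod k => i + 1)
        (Equiv.addRight (1 : ZMod k)).bijective _ _ (fun i => rfl)
    have : ∑ i, f i = B.card + A.card := by
      rw [hf, Finset.sum_add_distrib, h1, h2]
    omega
  have hle : ∀ i, f i ≤ 1 := by
    intro i
    rcases em (D.Arc (c i) z) with h | h
    · have h2 : ¬ D.Arc z (c (i+1)) := fun h2 => hnoins i ⟨h, h2⟩
      simp [hf, h, h2]
    · simp only [hf, if_neg h, zero_add]
      split <;> omega
  have hone : ∀ i, f i = 1 := by
    intro i₀
    by_contra hne
    have hf0 : f i₀ = 0 := by have := hle i₀; omega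
    have hsum_erase : ∑ i ∈ Finset.univ.erase i₀, f i ≤ (Finset.univ.erase i₀).card := by
      calc ∑ i ∈ Finset.univ.erase i₀, f i ≤ ∑ _i ∈ Finset.univ.erase i₀, 1 :=
            Finset.sum_le_sum (fun i _ => hle i)
        _ = (Finset.univ.erase i₀).card := by simp
    have hcard_erase : (Finset.univ.erase i₀).card = k - 1 := by
      rw [Finset.card_erase_of_mem (Finset.mem_univ _)]
      simp [ZMod.card]
    have := Finset.sum_erase_add Finset.univ f (Finset.mem_univ i₀)
    omega
  intro i
  have h1 := hone i
  have h2 := hnoins i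
  rcases em (D.Arc (c i) z) with h | h <;> rcases em (D.Arc z (c (i+1))) with h' | h'
  · exact absurd ⟨h, h'⟩ h2
  · simp [h, h']
  · simp [h, h']
  · simp only [hf, if_neg h, if_neg h'] at h1; omega

theorem replace_cycle {k : ℕ} (hk3 : 3 ≤ k) {b : ZMod k → V} (hb : D.IsCycle b)
    {x : V} (hx : x ∉ Set.range b) (j₀ : ZMod k)
    (h1 : D.Arc (b (j₀ - 1)) x) (h2 : D.Arc x (b (j₀ + 1))) :
    D.IsCycle (fun j => if j = j₀ then x else b j) ∧
    b j₀ ∉ Set.range (fun j => if j = j₀ then x else b j) ∧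
    (Set.range b ∪ {x} = Set.univ →
      Set.range (fun j => if j = j₀ then x else b j) ∪ {b j₀} = Set.univ) := by
  obtain ⟨hk2, hinj, harc⟩ := hb
  haveI : NeZero k := ⟨by omega⟩
  haveI : Fact (1 < k) := ⟨by omega⟩
  have h10 : (1 : ZMod k) ≠ 0 := by
    intro h
    have := congrArg ZMod.val h
    rw [ZMod.val_one, ZMod.val_zero] at this
    omega
  refine ⟨⟨by omega, ?_, ?_⟩, ?_, ?_⟩
  · intro i j hij
    simp only at hij
    by_cases hi : i = j₀ <;> by_cases hj : j = j₀
    · rw [hi, hj]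
    · rw [if_pos hi, if_neg hj] at hij
      exact absurd ⟨j, hij.symm⟩ hx
    · rw [if_neg hi, if_pos hj] at hij
      exact absurd ⟨i, hij⟩ hx
    · rw [if_neg hi, if_neg hj] at hij
      exact hinj hij
  · intro i
    simp only
    by_cases hi : i = j₀
    · subst hi
      have hne : i + 1 ≠ i := by
        intro h
        have : (1 : ZMod k) = 0 := by
          have := congrArg (fun t => t - i) h
          simpa [add_comm] using this
        exact h10 this
      rw [if_pos rfl, if_neg hne]
      exact h2
    · by_cases hi1 : i + 1 = j₀
      · rw [if_neg hi, if_pos hi1]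
        have : i = j₀ - 1 := by rw [← hi1]; ring
        rw [this]
        exact h1
      · rw [if_neg hi, if_neg hi1]
        exact harc i
  · rintro ⟨i, hi⟩
    simp only at hi
    by_cases h : i = j₀
    · rw [if_pos h] at hi
      exact hx ⟨j₀, hi.symm ▸ rfl⟩
    · rw [if_neg h] at hi
      exact h (hinj hi)
  · intro huniv
    apply Set.eq_univ_of_univ_subset
    intro v _
    have : v ∈ Set.range b ∪ {x} := huniv ▸ Set.mem_univ v
    rcases this with ⟨i, rfl⟩ | h
    · by_cases h : i = j₀
      · right; rw [h]; rfl
      · left; exact ⟨i, by simp [h]⟩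
    · simp only [Set.mem_singleton_iff] at h
      subst h
      left; exact ⟨j₀, by simp⟩

end Rem2

open Rem2

/-- **Remark 2.** Setup as in Claim 3 (`b i = x_i`, `y = x_{n-1} = b 0`, `p = n-2 = 2m-1`).
Let `x_{l_1}, …, x_{l_r}` with `2 ≤ l_1 < l_2 < ⋯ < l_r ≤ p-1` be vertices each adjacent
to neither `x` nor `y`. Then `{x, y, x_{l_1}, …, x_{l_r}}` is an independent set. -/
theorem statement12 {V : Type*} [Fintype V] (m : ℕ) (D : Dgr V)
    (hcard : Fintype.card V = 2 * m + 1) (hn : 5 ≤ 2 * m + 1)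
    (hstrong : D.Strong)
    (hnocyc : ¬ D.CycleThrough {u | D.TVertex m u})
    (b : ZMod (2 * m) → V) (hb : D.IsCycle b)
    (x : V) (hx : x ∉ Set.range b)
    (hxy : ¬ D.Adj x (b 0))
    (r : ℕ) (l : Fin r → ℕ) (hmono : StrictMono l)
    (hl1 : ∀ i, 2 ≤ l i) (hl2 : ∀ i, l i ≤ 2 * m - 2)
    (hnadjx : ∀ i, ¬ D.Adj (b (l i : ZMod (2 * m))) x)
    (hnadjy : ∀ i, ¬ D.Adj (b (l i : ZMod (2 * m))) (b 0)) :
    (insert x (insert (b 0) (Set.range fun i => b (l i : ZMod (2 * m))))).Pairwise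
      (fun a c => ¬ D.Adj a c) := by
  classical
  have hm : 2 ≤ m := by omega
  haveI : NeZero (2*m) := ⟨by omega⟩
  haveI : Fact (1 < 2*m) := ⟨by omega⟩
  have hbinj := hb.2.1
  have hbarc := hb.2.2
  set g : ℕ → V := fun t => b ((t : ZMod (2*m))) with hg
  -- cast helpers
  have hcinj : ∀ {s t : ℕ}, s < 2*m → t < 2*m → (((s:ℕ) : ZMod (2*m)) = t ↔ s = t) := by
    intro s t hs ht
    constructor
    · intro h
      have := congrArg ZMod.val h
      rwa [ZMod.val_natCast_of_lt hs, ZMod.val_natCast_of_lt ht] at this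
    · intro h; rw [h]
  have castne : ∀ {s t : ℕ}, s < 2*m → t < 2*m → s ≠ t →
      ((s:ℕ) : ZMod (2*m)) ≠ ((t:ℕ) : ZMod (2*m)) :=
    fun hs ht hst h => hst ((hcinj hs ht).1 h)
  have hne0 : ∀ t : ℕ, t < 2*m → t ≠ 0 → ((t:ℕ) : ZMod (2*m)) ≠ 0 := by
    intro t ht htne
    have h0 : (0 : ZMod (2*m)) = ((0:ℕ) : ZMod (2*m)) := by simp
    rw [h0]
    exact castne ht (by omega) htne
  have hgne : ∀ {s t : ℕ}, s < 2*m → t < 2*m → s ≠ t → g s ≠ g t := by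
    intro s t hs ht hst heq
    exact castne hs ht hst (hbinj heq)
  have garc : ∀ t : ℕ, D.Arc (g t) (g (t+1)) := by
    intro t
    have h1 : ((t+1:ℕ) : ZMod (2*m)) = ((t:ℕ) : ZMod (2*m)) + 1 := by push_cast; ring
    simp only [hg]
    rw [h1]
    exact hbarc _
  have hg0 : g 0 = b 0 := by simp only [hg, Nat.cast_zero]
  have ewrap : ((2*m-1:ℕ) : ZMod (2*m)) + 1 = 0 := by
    have h1 : (((2*m-1)+1 : ℕ) : ZMod (2*m)) = ((2*m-1:ℕ) : ZMod (2*m)) + 1 := by push_cast; ring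
    rw [← h1, show 2*m-1+1 = 2*m from by omega, ZMod.natCast_self]
  -- the vertex set
  have hcard_range : (Set.range b).ncard = 2*m := by
    rw [← Set.image_univ, Set.ncard_image_of_injective _ hbinj, Set.ncard_univ,
      Nat.card_eq_fintype_card, ZMod.card]
  have huniv : Set.range b ∪ {x} = Set.univ := by
    apply Set.eq_of_subset_of_ncard_le (Set.subset_univ _)
    rw [Set.ncard_univ, Nat.card_eq_fintype_card, hcard, Set.union_singleton,
      Set.ncard_insert_of_notMem hx (Set.toFinite _), hcard_range]
  have hTuniv : {u | D.TVertex m u} ⊆ Set.range b ∪ {x} := by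
    rw [huniv]; exact Set.subset_univ _
  -- no insertion of x into b
  have noins_b : ∀ i, ¬ (D.Arc (b i) x ∧ D.Arc x (b (i+1))) := by
    rintro i ⟨p, q⟩
    exact hnocyc (insert_cycle b hb x hx i p q _ hTuniv)
  have hxy1 : ¬ D.Arc x (b 0) := fun h => hxy (Or.inl h)
  have hxy2 : ¬ D.Arc (b 0) x := fun h => hxy (Or.inr h)
  -- x is a T-vertex
  have hxT : D.TVertex m x := by
    by_contra hT
    apply hnocyc
    refine ⟨2*m, b, hb, ?_⟩
    intro u hu
    have : u ∈ Set.range b ∪ {x} := by rw [huniv]; trivial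
    rcases this with h | h
    · exact h
    · rw [Set.mem_singleton_iff] at h
      exact absurd (h ▸ hu) hT
  have iffx := counting rfl (by omega) b hbinj x huniv hxT.1 hxT.2 noins_b
  -- the arcs around y = b 0
  have hA1 : D.Arc x (g 1) := by
    have h := not_not.1 (fun h => hxy2 ((iffx 0).2 h))
    have e : (0 : ZMod (2*m)) + 1 = ((1:ℕ) : ZMod (2*m)) := by push_cast; ring
    rw [e] at h
    exact h
  have hA2 : D.Arc (g (2*m-1)) x := by
    refine (iffx (((2*m-1:ℕ)) : ZMod (2*m))).2 ?_
    rw [ewrap]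
    exact hxy1
  -- the cycle c' : replace y by x
  have hstep1 : D.Arc (b ((0 : ZMod (2*m)) - 1)) x := by
    have e : (0 : ZMod (2*m)) - 1 = ((2*m-1:ℕ) : ZMod (2*m)) := by linear_combination - ewrap
    rw [e]
    exact hA2
  have hstep2 : D.Arc x (b ((0 : ZMod (2*m)) + 1)) := by
    have e : (0 : ZMod (2*m)) + 1 = ((1:ℕ) : ZMod (2*m)) := by push_cast; ring
    rw [e]
    exact hA1
  obtain ⟨hc'cyc, hc'mem, hc'univ⟩ := replace_cycle (by omega) hb hx 0 hstep1 hstep2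
  set c' : ZMod (2*m) → V := fun j => if j = 0 then x else b j with hc'
  have hc'univ' : Set.range c' ∪ {b 0} = Set.univ := hc'univ huniv
  have hc'app : ∀ j, j ≠ 0 → c' j = b j := by
    intro j hj
    simp only [hc', if_neg hj]
  have hyT : D.TVertex m (b 0) := by
    by_contra hT
    apply hnocyc
    refine ⟨2*m, c', hc'cyc, ?_⟩
    intro u hu
    have : u ∈ Set.range c' ∪ {b 0} := by rw [hc'univ']; trivial
    rcases this with h | h
    · exact h
    · rw [Set.mem_singleton_iff] at h
      exact absurd (h ▸ hu) hT
  have noins_c' : ∀ i, ¬ (D.Arc (c' i) (b 0) ∧ D.Arc (b 0) (c' (i+1))) := by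
    rintro i ⟨p, q⟩
    refine hnocyc (insert_cycle c' hc'cyc (b 0) hc'mem i p q _ ?_)
    rw [hc'univ']; exact Set.subset_univ _
  have iffy := counting rfl (by omega) c' hc'cyc.2.1 (b 0) hc'univ' hyT.1 hyT.2 noins_c'
  -- the per-l facts
  have main : ∀ lo : ℕ, 2 ≤ lo → lo ≤ 2*m - 2 →
      ¬ D.Adj (b ((lo:ℕ) : ZMod (2*m))) x → ¬ D.Adj (b ((lo:ℕ) : ZMod (2*m))) (b 0) →
      D.Arc (g (lo-1)) x ∧ D.Arc x (g (lo+1)) ∧ D.Arc (g (lo-1)) (g 0) ∧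
      D.Arc (g 0) (g (lo+1)) ∧ D.Arc (g (2*m-1)) (g lo) ∧ D.Arc (g lo) (g 1) := by
    intro lo hlo2 hlo2m hnx hny
    have nax1 : ¬ D.Arc (g lo) x := fun h => hnx (Or.inl h)
    have nax2 : ¬ D.Arc x (g lo) := fun h => hnx (Or.inr h)
    have nay1 : ¬ D.Arc (g lo) (b 0) := fun h => hny (Or.inl h)
    have nay2 : ¬ D.Arc (b 0) (g lo) := fun h => hny (Or.inr h)
    have hlolt : lo < 2*m := by omega
    have hl0 : ((lo:ℕ) : ZMod (2*m)) ≠ 0 := hne0 lo hlolt (by omega)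
    have hl10 : ((lo+1:ℕ) : ZMod (2*m)) ≠ 0 := hne0 _ (by omega) (by omega)
    have ecast1 : ((lo-1 : ℕ) : ZMod (2*m)) + 1 = ((lo:ℕ) : ZMod (2*m)) := by
      have h1 : ((lo-1+1 : ℕ) : ZMod (2*m)) = ((lo-1:ℕ) : ZMod (2*m)) + 1 := by push_cast; ring
      rw [← h1, show lo-1+1 = lo from by omega]
    have ecast2 : ((lo : ℕ) : ZMod (2*m)) + 1 = ((lo+1:ℕ) : ZMod (2*m)) := by push_cast; ring
    have F1 : D.Arc (g (lo-1)) x := by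
      refine (iffx (((lo-1:ℕ)) : ZMod (2*m))).2 ?_
      rw [ecast1]
      exact nax2
    have F2 : D.Arc x (g (lo+1)) := by
      have h := not_not.1 (fun h => nax1 ((iffx (((lo:ℕ)) : ZMod (2*m))).2 h))
      rw [ecast2] at h
      exact h
    have F3 : D.Arc (g (lo-1)) (g 0) := by
      rw [hg0]
      have h := (iffy (((lo-1:ℕ)) : ZMod (2*m))).2 (by
        rw [ecast1, hc'app _ hl0]
        exact nay2)
      rwa [hc'app _ (hne0 (lo-1) (by omega) (by omega))] at h
    have F4 : D.Arc (g 0) (g (lo+1)) := by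
      rw [hg0]
      have h := not_not.1 (fun hh => nay1 (by
        show D.Arc (b ((lo:ℕ) : ZMod (2*m))) (b 0)
        rw [← hc'app (((lo:ℕ)) : ZMod (2*m)) hl0]
        exact (iffy _).2 hh))
      rwa [ecast2, hc'app _ hl10] at h
    -- cycle cL : replace b lo by x
    have hstepl1 : D.Arc (b (((lo:ℕ) : ZMod (2*m)) - 1)) x := by
      have e : ((lo:ℕ) : ZMod (2*m)) - 1 = ((lo-1:ℕ) : ZMod (2*m)) := by linear_combination - ecast1
      rw [e]
      exact F1
    have hstepl2 : D.Arc x (b (((lo:ℕ) : ZMod (2*m)) + 1)) := by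
      rw [ecast2]
      exact F2
    obtain ⟨hLcyc, hLmem, hLuniv⟩ := replace_cycle (by omega) hb hx ((lo:ℕ) : ZMod (2*m)) hstepl1 hstepl2
    set cL : ZMod (2*m) → V := fun j => if j = ((lo:ℕ) : ZMod (2*m)) then x else b j with hcL
    have hLuniv' : Set.range cL ∪ {b ((lo:ℕ) : ZMod (2*m))} = Set.univ := hLuniv huniv
    have hcLapp : ∀ j, j ≠ ((lo:ℕ) : ZMod (2*m)) → cL j = b j := by
      intro j hj
      simp only [hcL, if_neg hj]
    have hlT : D.TVertex m (b ((lo:ℕ) : ZMod (2*m))) := by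
      by_contra hT
      apply hnocyc
      refine ⟨2*m, cL, hLcyc, ?_⟩
      intro u hu
      have : u ∈ Set.range cL ∪ {b ((lo:ℕ) : ZMod (2*m))} := by rw [hLuniv']; trivial
      rcases this with h | h
      · exact h
      · rw [Set.mem_singleton_iff] at h
        exact absurd (h ▸ hu) hT
    have noins_cL : ∀ i, ¬ (D.Arc (cL i) (b ((lo:ℕ) : ZMod (2*m))) ∧
        D.Arc (b ((lo:ℕ) : ZMod (2*m))) (cL (i+1))) := by
      rintro i ⟨p, q⟩
      refine hnocyc (insert_cycle cL hLcyc _ hLmem i p q _ ?_)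
      rw [hLuniv']; exact Set.subset_univ _
    have iffl := counting rfl (by omega) cL hLcyc.2.1 _ hLuniv' hlT.1 hlT.2 noins_cL
    have F5 : D.Arc (g (2*m-1)) (g lo) := by
      have hne1 : ((2*m-1:ℕ) : ZMod (2*m)) ≠ ((lo:ℕ) : ZMod (2*m)) :=
        castne (by omega) hlolt (by omega)
      have h := (iffl (((2*m-1:ℕ)) : ZMod (2*m))).2 (by
        rw [ewrap, hcLapp 0 (Ne.symm hl0)]
        exact nay1)
      rwa [hcLapp _ hne1] at h
    have F6 : D.Arc (g lo) (g 1) := by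
      have hne1l : (1 : ZMod (2*m)) ≠ ((lo:ℕ) : ZMod (2*m)) := by
        rw [← Nat.cast_one]
        exact castne (by omega) hlolt (by omega)
      have h := not_not.1 (fun hh => nay2 (by
        rw [← hcLapp 0 (Ne.symm hl0)]
        exact (iffl 0).2 hh))
      rw [zero_add, hcLapp 1 hne1l] at h
      show D.Arc (g lo) (b ((1:ℕ) : ZMod (2*m)))
      rw [Nat.cast_one]
      exact h
    exact ⟨F1, F2, F3, F4, F5, F6⟩
  -- the key independence lemma
  have key : ∀ lo hi : ℕ, 2 ≤ lo → lo < hi → hi ≤ 2*m - 2 →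
      ¬ D.Adj (b ((lo:ℕ) : ZMod (2*m))) x → ¬ D.Adj (b ((lo:ℕ) : ZMod (2*m))) (b 0) →
      ¬ D.Adj (b ((hi:ℕ) : ZMod (2*m))) x → ¬ D.Adj (b ((hi:ℕ) : ZMod (2*m))) (b 0) →
      ¬ D.Adj (g lo) (g hi) := by
    intro lo hi hlo2 hlohi hhi2m hnxlo hnylo hnxhi hnyhi hadj
    obtain ⟨F1lo, F2lo, F3lo, F4lo, F5lo, F6lo⟩ := main lo hlo2 (by omega) hnxlo hnylo
    obtain ⟨F1hi, F2hi, F3hi, F4hi, F5hi, F6hi⟩ := main hi (by omega) hhi2m hnxhi hnyhi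
    have hny2hi : ¬ D.Arc (b 0) (g hi) := fun h => hnyhi (Or.inr h)
    have hgap : lo + 2 ≤ hi := by
      by_contra hgap
      have he : lo + 1 = hi := by omega
      rw [← hg0] at hny2hi
      exact hny2hi (he ▸ F4lo)
    -- generic builder
    have buildP : ∀ P : List ℕ, (∀ t, t ∈ P → t < 2*m) → (∀ t, t < 2*m → t ∈ P) →
        P.length = 2*m →
        List.Chain' D.Arc (x :: P.map g) →
        (∀ u ∈ (x :: P.map g).getLast?, D.Arc u x) → False := by
      intro P hPlt hPmem hPlen hchain hclose
      have hsub : Finset.range (2*m) ⊆ P.toFinset :=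
        fun t ht => List.mem_toFinset.2 (hPmem t (Finset.mem_range.1 ht))
      have hcard1 : 2*m ≤ P.toFinset.card := by
        calc 2*m = (Finset.range (2*m)).card := (Finset.card_range _).symm
          _ ≤ _ := Finset.card_le_card hsub
      have hPnd : P.Nodup := Multiset.toFinset_card_eq_card_iff_nodup.1
        (le_antisymm (List.toFinset_card_le P) (by simpa [hPlen] using hcard1))
      apply hnocyc
      have h0P : (0:ℕ) ∈ P := hPmem 0 (by omega)
      refine cycleThrough_of_list D (x :: P.map g) ?_ ?_ hchain ?_ _ ?_
      · have := List.length_pos_iff.2 (List.ne_nil_of_mem h0P)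
        simp only [List.length_cons, List.length_map]
        omega
      · rw [List.nodup_cons]
        constructor
        · intro hxm
          rw [List.mem_map] at hxm
          obtain ⟨t, _, ht⟩ := hxm
          exact hx ⟨_, ht⟩
        · refine List.Nodup.map_on ?_ hPnd
          intro t1 h1 t2 h2 heq
          by_contra hne12
          exact hgne (hPlt _ h1) (hPlt _ h2) hne12 heq
      · intro u hu v hv
        simp only [List.head?_cons, Option.mem_some_iff] at hv
        subst hv
        exact hclose u hu
      · intro v hv
        have : v ∈ Set.range b ∪ {x} := by rw [huniv]; trivial
        rcases this with ⟨i, rfl⟩ | h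
        · rw [List.mem_cons]
          right
          rw [List.mem_map]
          refine ⟨i.val, hPmem i.val (ZMod.val_lt i), ?_⟩
          simp only [hg, ZMod.natCast_val, ZMod.cast_id]
        · rw [Set.mem_singleton_iff] at h
          subst h
          exact List.mem_cons_self
    rcases hadj with harc | harc
    · -- case A : arc from g lo to g hi
      apply buildP (List.range' (lo+1) (hi-1-lo) ++ (List.range' 0 (lo+1) ++ List.range' hi (2*m-hi)))
      · intro t ht
        simp only [List.mem_append, List.mem_range'] at ht
        rcases ht with h | h | h <;> (obtain ⟨j, hj, rfl⟩ := h; omega)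
      · intro t ht
        simp only [List.mem_append, List.mem_range']
        rcases Nat.lt_or_ge t (lo+1) with h | h
        · exact Or.inr (Or.inl ⟨t, by omega, by omega⟩)
        · rcases Nat.lt_or_ge t hi with h2 | h2
          · exact Or.inl ⟨t - (lo+1), by omega, by omega⟩
          · exact Or.inr (Or.inr ⟨t - hi, by omega, by omega⟩)
      · simp only [List.length_append, List.length_range']
        omega
      · rw [List.map_append, List.map_append]
        refine List.isChain_cons.2 ⟨?_, ?_⟩
        · intro w hw
          rw [head?_segA g (lo+1) (hi-1-lo) (by omega), Option.mem_some_iff] at hw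
          subst hw
          exact F2lo
        · refine chain'_segA g garc (lo+1) (hi-1-lo) (by omega) _ ?_ ?_
          · refine chain'_segA g garc 0 (lo+1) (by omega) _ (chain'_seg _ g garc _ _) ?_
            intro w hw
            rw [head?_seg g hi (2*m-hi) (by omega), Option.mem_some_iff] at hw
            subst hw
            rw [show 0 + (lo+1) - 1 = lo from by omega]
            exact harc
          · intro w hw
            rw [head?_segA g 0 (lo+1) (by omega), Option.mem_some_iff] at hw
            subst hw
            rw [show (lo+1) + (hi-1-lo) - 1 = hi - 1 from by omega]
            exact F3hi
      · intro u hu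
        rw [List.map_append, List.map_append] at hu
        rw [show (x :: ((List.range' (lo+1) (hi-1-lo)).map g ++
              ((List.range' 0 (lo+1)).map g ++ (List.range' hi (2*m-hi)).map g))) =
            ((x :: (List.range' (lo+1) (hi-1-lo)).map g) ++ (List.range' 0 (lo+1)).map g)
              ++ (List.range' hi (2*m-hi)).map g from by simp,
          List.getLast?_append_of_ne_nil _ (seg_ne_nil g hi (2*m-hi) (by omega)),
          getLast?_seg g hi (2*m-hi) (by omega), Option.mem_some_iff] at hu
        subst hu
        rw [show hi + (2*m-hi) - 1 = 2*m - 1 from by omega]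
        exact hA2
    · -- case B : arc from g hi to g lo
      apply buildP (List.range' (hi+1) (2*m-1-hi) ++ (List.range' hi 1 ++ (List.range' lo 1 ++
          (List.range' 1 (lo-1) ++ (List.range' 0 1 ++ List.range' (lo+1) (hi-1-lo))))))
      · intro t ht
        simp only [List.mem_append, List.mem_range'] at ht
        rcases ht with h | h | h | h | h | h <;> (obtain ⟨j, hj, rfl⟩ := h; omega)
      · intro t ht
        simp only [List.mem_append, List.mem_range']
        rcases Nat.eq_or_lt_of_le (Nat.zero_le t) with h0 | h0
        · exact Or.inr (Or.inr (Or.inr (Or.inr (Or.inl ⟨0, by omega, by omega⟩))))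
        · rcases Nat.lt_or_ge t lo with h1 | h1
          · exact Or.inr (Or.inr (Or.inr (Or.inl ⟨t - 1, by omega, by omega⟩)))
          · rcases Nat.eq_or_lt_of_le h1 with h2 | h2
            · exact Or.inr (Or.inr (Or.inl ⟨0, by omega, by omega⟩))
            · rcases Nat.lt_or_ge t hi with h3 | h3
              · exact Or.inr (Or.inr (Or.inr (Or.inr (Or.inr ⟨t - (lo+1), by omega, by omega⟩))))
              · rcases Nat.eq_or_lt_of_le h3 with h4 | h4
                · exact Or.inr (Or.inl ⟨0, by omega, by omega⟩)
                · exact Or.inl ⟨t - (hi+1), by omega, by omega⟩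
      · simp only [List.length_append, List.length_range']
        omega
      · simp only [List.map_append]
        refine List.isChain_cons.2 ⟨?_, ?_⟩
        · intro w hw
          rw [head?_segA g (hi+1) (2*m-1-hi) (by omega), Option.mem_some_iff] at hw
          subst hw
          exact F2hi
        · refine chain'_segA g garc (hi+1) (2*m-1-hi) (by omega) _ ?_ ?_
          · refine chain'_segA g garc hi 1 (by omega) _ ?_ ?_
            · refine chain'_segA g garc lo 1 (by omega) _ ?_ ?_
              · refine chain'_segA g garc 1 (lo-1) (by omega) _ ?_ ?_
                · refine chain'_segA g garc 0 1 (by omega) _ (chain'_seg _ g garc _ _) ?_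
                  intro w hw
                  rw [head?_seg g (lo+1) (hi-1-lo) (by omega), Option.mem_some_iff] at hw
                  subst hw
                  rw [show 0 + 1 - 1 = 0 from by omega]
                  exact F4lo
                · intro w hw
                  rw [head?_segA g 0 1 (by omega), Option.mem_some_iff] at hw
                  subst hw
                  rw [show 1 + (lo-1) - 1 = lo - 1 from by omega]
                  exact F3lo
              · intro w hw
                rw [head?_segA g 1 (lo-1) (by omega), Option.mem_some_iff] at hw
                subst hw
                rw [show lo + 1 - 1 = lo from by omega]
                exact F6lo
            · intro w hw
              rw [head?_segA g lo 1 (by omega), Option.mem_some_iff] at hw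
              subst hw
              rw [show hi + 1 - 1 = hi from by omega]
              exact harc
          · intro w hw
            rw [head?_segA g hi 1 (by omega), Option.mem_some_iff] at hw
            subst hw
            rw [show (hi+1) + (2*m-1-hi) - 1 = 2*m - 1 from by omega]
            exact F5hi
      · intro u hu
        simp only [List.map_append] at hu
        rw [show (x :: ((List.range' (hi+1) (2*m-1-hi)).map g ++ ((List.range' hi 1).map g ++
              ((List.range' lo 1).map g ++ ((List.range' 1 (lo-1)).map g ++
              ((List.range' 0 1).map g ++ (List.range' (lo+1) (hi-1-lo)).map g)))))) =
            (x :: (List.range' (hi+1) (2*m-1-hi)).map g ++ ((List.range' hi 1).map g ++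
              ((List.range' lo 1).map g ++ ((List.range' 1 (lo-1)).map g ++
              (List.range' 0 1).map g)))) ++ (List.range' (lo+1) (hi-1-lo)).map g from by simp,
          List.getLast?_append_of_ne_nil _ (seg_ne_nil g (lo+1) (hi-1-lo) (by omega)),
          getLast?_seg g (lo+1) (hi-1-lo) (by omega), Option.mem_some_iff] at hu
        subst hu
        rw [show (lo+1) + (hi-1-lo) - 1 = hi - 1 from by omega]
        exact F1hi
  -- conclusion
  have hsym : ∀ {u v : V}, D.Adj u v → D.Adj v u := fun h => Or.symm h
  intro a ha c hc hne
  simp only [Set.mem_insert_iff, Set.mem_range] at ha hc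
  rcases ha with rfl | rfl | ⟨i, rfl⟩ <;> rcases hc with rfl | rfl | ⟨j, rfl⟩
  · exact absurd rfl hne
  · exact hxy
  · exact fun h => hnadjx j (hsym h)
  · exact fun h => hxy (hsym h)
  · exact absurd rfl hne
  · exact fun h => hnadjy j (hsym h)
  · exact hnadjx i
  · exact hnadjy i
  · intro hadj
    have hll : l i ≠ l j := by
      intro h
      exact hne (by rw [h])
    rcases Nat.lt_or_ge (l i) (l j) with h | h
    · exact key (l i) (l j) (hl1 i) h (hl2 j) (hnadjx i) (hnadjy i) (hnadjx j) (hnadjy j) hadj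
    · have h' : l j < l i := by omega
      exact key (l j) (l i) (hl1 j) h' (hl2 i) (hnadjx j) (hnadjy j) (hnadjx i) (hnadjy i) (hsym hadj)
end

section
/- Let m ≥ 1 and let D be any digraph in the class L_2 (a digraph on the 2m+1 vertices {x_1, …, x_{2m}, x}). Then D is not 2-strong, the vertices x and x_{2m} are T-vertices of D, and no cycle of D contains both x and x_{2m}. -/
/-- Any digraph `D` in the class `L₂` (on `2m+1` vertices `x_1, …, x_{2m}, x`, with
`b i = x_i`, so `x_{2m} = b 0`; the defining properties of `L₂` are unfolded as
hypotheses) is not 2-strong, its vertices `x` and `x_{2m}` are `T`-vertices, and no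
cycle of `D` contains both `x` and `x_{2m}`. -/
theorem statement14 {V : Type*} [Fintype V] (m : ℕ) (hm : 1 ≤ m) (D : Dgr V)
    (hcard : Fintype.card V = 2 * m + 1)
    (b : ZMod (2 * m) → V) (x : V)
    (hinj : Function.Injective b) (hx : x ∉ Set.range b)
    (hcyc : ∀ i, D.Arc (b i) (b (i + 1)))
    (hnadj : ¬ D.Adj x (b 0))
    (hN1 : {v | D.Arc x v} = (fun i : ℕ => b i) '' Set.Icc 1 m)
    (hN2 : {v | D.Arc (b 0) v} = (fun i : ℕ => b i) '' Set.Icc 1 m)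
    (hN3 : {v | D.Arc v x} = (fun i : ℕ => b i) '' Set.Icc m (2 * m - 1))
    (hN4 : {v | D.Arc v (b 0)} = (fun i : ℕ => b i) '' Set.Icc m (2 * m - 1))
    (hno : ∀ i ∈ Set.Icc 1 (m - 1), ∀ j ∈ Set.Icc (m + 1) (2 * m - 1),
      ¬ D.Arc (b (i : ℕ)) (b (j : ℕ))) :
    ¬ D.TwoStrong ∧ D.TVertex m x ∧ D.TVertex m (b 0) ∧
    ¬ D.CycleThrough {x, b 0} := by
  haveI : NeZero (2 * m) := ⟨by omega⟩
  classical
  -- natural-number injectivity of b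
  have hbinj : ∀ i j : ℕ, i < 2 * m → j < 2 * m → b i = b j → i = j := by
    intro i j hi hj h
    have h' := hinj h
    have h1 := ZMod.val_cast_of_lt hi
    have h2 := ZMod.val_cast_of_lt hj
    rw [← h1, ← h2, h']
  have hxb : ∀ j : ZMod (2 * m), x ≠ b j := fun j h => hx ⟨j, h.symm⟩
  -- every vertex is x or some b j with j < 2m
  have hV : ∀ v : V, v = x ∨ ∃ j : ℕ, j < 2 * m ∧ v = b j := by
    have hcover : insert x (Set.range b) = Set.univ := by
      apply Set.eq_of_subset_of_ncard_le (Set.subset_univ _)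
      have h1 : (Set.range b).ncard = 2 * m := by
        have := Nat.card_range_of_injective hinj
        rw [Nat.card_zmod] at this
        exact this
      rw [Set.ncard_insert_of_notMem hx (Set.toFinite _), h1, Set.ncard_univ,
        Nat.card_eq_fintype_card, hcard]
    intro v
    have hv : v ∈ insert x (Set.range b) := hcover ▸ Set.mem_univ v
    rcases hv with rfl | ⟨i, rfl⟩
    · exact Or.inl rfl
    · exact Or.inr ⟨i.val, ZMod.val_lt i, by rw [ZMod.natCast_rightInverse i]⟩
  -- out-arcs of x and b 0
  have hAx : ∀ w, D.Arc x w → ∃ j : ℕ, 1 ≤ j ∧ j ≤ m ∧ w = b j := by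
    intro w hw
    have hmem : w ∈ {v | D.Arc x v} := hw
    rw [hN1] at hmem
    obtain ⟨j, hj, rfl⟩ := hmem
    exact ⟨j, hj.1, hj.2, rfl⟩
  have hA0 : ∀ w, D.Arc (b 0) w → ∃ j : ℕ, 1 ≤ j ∧ j ≤ m ∧ w = b j := by
    intro w hw
    have hmem : w ∈ {v | D.Arc (b 0) v} := hw
    rw [hN2] at hmem
    obtain ⟨j, hj, rfl⟩ := hmem
    exact ⟨j, hj.1, hj.2, rfl⟩
  -- in-arcs of x and b 0
  have hIx : ∀ w, D.Arc w x → ∃ j : ℕ, m ≤ j ∧ j ≤ 2 * m - 1 ∧ w = b j := by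
    intro w hw
    have hmem : w ∈ {v | D.Arc v x} := hw
    rw [hN3] at hmem
    obtain ⟨j, hj, rfl⟩ := hmem
    exact ⟨j, hj.1, hj.2, rfl⟩
  have hI0 : ∀ w, D.Arc w (b 0) → ∃ j : ℕ, m ≤ j ∧ j ≤ 2 * m - 1 ∧ w = b j := by
    intro w hw
    have hmem : w ∈ {v | D.Arc v (b 0)} := hw
    rw [hN4] at hmem
    obtain ⟨j, hj, rfl⟩ := hmem
    exact ⟨j, hj.1, hj.2, rfl⟩
  -- out-arcs from b i, i ≤ m - 1, go to {b 1, ..., b m}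
  have hAi : ∀ i : ℕ, i ≤ m - 1 → ∀ w, D.Arc (b i) w → ∃ j : ℕ, 1 ≤ j ∧ j ≤ m ∧ w = b j := by
    intro i hi w hw
    rcases hV w with rfl | ⟨j, hj, rfl⟩
    · obtain ⟨l, hl1, hl2, hl⟩ := hIx _ hw
      have := hbinj i l (by omega) (by omega) hl
      omega
    · by_cases hj0 : j = 0
      · subst hj0
        rw [Nat.cast_zero] at hw
        obtain ⟨l, hl1, hl2, hl⟩ := hI0 _ hw
        have := hbinj i l (by omega) (by omega) hl
        omega
      · by_cases hjm : j ≤ m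
        · exact ⟨j, by omega, hjm, rfl⟩
        · exfalso
          by_cases hi0 : i = 0
          · subst hi0
            rw [Nat.cast_zero] at hw
            obtain ⟨l, hl1, hl2, hl⟩ := hA0 _ hw
            have := hbinj j l (by omega) (by omega) hl
            omega
          · exact hno i ⟨by omega, hi⟩ j ⟨by omega, by omega⟩ hw
  -- the key predicate: membership in T = {x, b 0, b 1, ..., b (m-1)}
  set PT : V → Prop := fun v => v = x ∨ ∃ i : ℕ, i ≤ m - 1 ∧ v = b i with hPT
  have hstep : ∀ v w, PT v → D.Arc v w → ∃ j : ℕ, 1 ≤ j ∧ j ≤ m ∧ w = b j := by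
    rintro v w (rfl | ⟨i, hi, rfl⟩) hw
    · exact hAx w hw
    · exact hAi i hi w hw
  have hPT0 : PT (b 0) := Or.inr ⟨0, Nat.zero_le _, by rw [Nat.cast_zero]⟩
  have hPTx : PT x := Or.inl rfl
  have hnPT : ∀ l : ℕ, m ≤ l → l ≤ 2 * m - 1 → ¬ PT (b l) := by
    rintro l h1 h2 (h | ⟨i, hi, h⟩)
    · exact hxb _ h.symm
    · have := hbinj l i (by omega) (by omega) h
      omega
  -- Part 1 : not 2-strong
  have part1 : ¬ D.TwoStrong := by
    rintro ⟨-, hstrong⟩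
    have hxm : x ∈ {v : V | v ≠ b (m : ℕ)} := hxb _
    have h0m : (b 0 : V) ∈ {v : V | v ≠ b (m : ℕ)} := by
      intro h
      have : b ((0 : ℕ) : ZMod (2 * m)) = b ((m : ℕ) : ZMod (2 * m)) := by
        rw [Nat.cast_zero]; exact h
      have := hbinj 0 m (by omega) (by omega) this
      omega
    have hne : (⟨x, hxm⟩ : {v : V // v ∈ {v : V | v ≠ b (m : ℕ)}}) ≠ ⟨b 0, h0m⟩ :=
      fun h => hxb 0 (congrArg Subtype.val h)
    have hreach := hstrong (b (m : ℕ)) ⟨x, hxm⟩ ⟨b 0, h0m⟩ hne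
    set PU : V → Prop := fun v => v = x ∨ ∃ i : ℕ, 1 ≤ i ∧ i ≤ m - 1 ∧ v = b i with hPU
    have step1 : ∀ p q : V, PU p → D.Arc p q → q ≠ b (m : ℕ) → PU q := by
      intro p q hp hq hqm
      have hp' : PT p := by
        rcases hp with rfl | ⟨i, h1, h2, rfl⟩
        · exact Or.inl rfl
        · exact Or.inr ⟨i, h2, rfl⟩
      obtain ⟨j, hj1, hj2, rfl⟩ := hstep p q hp' hq
      have hjm : j ≠ m := fun h => hqm (by rw [h])
      exact Or.inr ⟨j, hj1, by omega, rfl⟩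
    have key : ∀ q : {v : V // v ∈ {v : V | v ≠ b (m : ℕ)}},
        Relation.TransGen (D.restrict {v : V | v ≠ b (m : ℕ)}).Arc ⟨x, hxm⟩ q → PU q.1 := by
      intro q hq
      induction hq with
      | @single q' h => exact step1 _ _ (Or.inl rfl) h q'.2
      | @tail q' q'' h1 h2 ih => exact step1 _ _ ih h2 q''.2
    have hb0 : PU (b 0) := key _ hreach
    rcases hb0 with h | ⟨i, h1, h2, h⟩
    · exact hxb 0 h.symm
    · have : b ((0 : ℕ) : ZMod (2 * m)) = b i := by rw [Nat.cast_zero]; exact h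
      have := hbinj 0 i (by omega) (by omega) this
      omega
  -- injectivity on initial segments
  have hinjOn1 : Set.InjOn (fun i : ℕ => b i) (Set.Icc 1 m) := by
    intro i hi j hj h
    simp only [Set.mem_Icc] at hi hj
    exact hbinj i j (by omega) (by omega) h
  have hinjOn2 : Set.InjOn (fun i : ℕ => b i) (Set.Icc m (2 * m - 1)) := by
    intro i hi j hj h
    simp only [Set.mem_Icc] at hi hj
    exact hbinj i j (by omega) (by omega) h
  have hinjOn1' : Set.InjOn (fun i : ℕ => b i) (Set.Icc 1 m) := hinjOn1
  have hcard1 : ((fun i : ℕ => b i) '' Set.Icc 1 m).ncard = m := by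
    rw [Set.ncard_image_of_injOn hinjOn1, ← Finset.coe_Icc, Set.ncard_coe_finset, Nat.card_Icc]
    omega
  have hcard2 : ((fun i : ℕ => b i) '' Set.Icc m (2 * m - 1)).ncard = m := by
    rw [Set.ncard_image_of_injOn hinjOn2, ← Finset.coe_Icc, Set.ncard_coe_finset, Nat.card_Icc]
    omega
  have part2 : D.TVertex m x := by
    constructor
    · show m ≤ {v | D.Arc x v}.ncard
      rw [hN1, hcard1]
    · show m ≤ {v | D.Arc v x}.ncard
      rw [hN3, hcard2]
  have part3 : D.TVertex m (b 0) := by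
    constructor
    · show m ≤ {v | D.Arc (b 0) v}.ncard
      rw [hN2, hcard1]
    · show m ≤ {v | D.Arc v (b 0)}.ncard
      rw [hN4, hcard2]
  -- Part 4 : no cycle through both x and b 0
  have part4 : ¬ D.CycleThrough {x, b 0} := by
    rintro ⟨k, c, ⟨hk2, hcinj, hcarc⟩, hsub⟩
    haveI : NeZero k := ⟨by omega⟩
    obtain ⟨ix, hix⟩ := hsub (Set.mem_insert _ _)
    obtain ⟨i0, hi0⟩ := hsub (Set.mem_insert_of_mem _ rfl)
    set P : ZMod k → Prop := fun i => PT (c i) with hP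
    have hPix : P ix := by rw [hP]; simpa [hix] using hPTx
    have hPi0 : P i0 := by rw [hP]; simpa [hi0] using hPT0
    -- predecessors of x and b 0 on the cycle are outside T
    have hpred : ∀ i : ZMod k, ∀ v : V, c i = v →
        (∀ w, D.Arc w v → ∃ j : ℕ, m ≤ j ∧ j ≤ 2 * m - 1 ∧ w = b j) → ¬ P (i - 1) := by
      intro i v hv hin
      have harc := hcarc (i - 1)
      rw [sub_add_cancel, hv] at harc
      obtain ⟨l, hl1, hl2, hl⟩ := hin _ harc
      rw [hP]
      simp only
      rw [hl]
      exact hnPT l hl1 hl2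
    have hnPix : ¬ P (ix - 1) := hpred ix x hix hIx
    have hnPi0 : ¬ P (i0 - 1) := hpred i0 (b 0) hi0 hI0
    -- step lemma: leaving T on the cycle lands at b m
    have hexit : ∀ i : ZMod k, P i → ¬ P (i + 1) → c (i + 1) = b (m : ℕ) := by
      intro i h1 h2
      obtain ⟨j, hj1, hj2, hj⟩ := hstep (c i) (c (i + 1)) h1 (hcarc i)
      have : j = m := by
        by_contra hne
        exact h2 (Or.inr ⟨j, by omega, hj⟩)
      rw [hj, this]
    -- minimal exit times
    have exmin : ∀ a : ZMod k, P a → (∃ s : ℕ, ¬ P (a + (s : ℕ))) →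
        ∃ t : ℕ, 1 ≤ t ∧ ¬ P (a + (t : ℕ)) ∧ ∀ u : ℕ, u < t → P (a + (u : ℕ)) := by
      intro a ha hex
      have ht := Nat.find_spec hex
      refine ⟨Nat.find hex, ?_, ht, fun u hu => not_not.mp (Nat.find_min hex hu)⟩
      rcases Nat.eq_zero_or_pos (Nat.find hex) with h | h
      · exfalso; rw [h] at ht; simp at ht; exact ht ha
      · exact h
    -- exit time from ix
    obtain ⟨t1, ht11, ht12, ht13⟩ := exmin ix hPix (by
      refine ⟨(i0 - 1 - ix).val, ?_⟩
      rw [ZMod.natCast_rightInverse (i0 - 1 - ix)]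
      have : ix + (i0 - 1 - ix) = i0 - 1 := by ring
      rw [this]; exact hnPi0)
    obtain ⟨t2, ht21, ht22, ht23⟩ := exmin i0 hPi0 (by
      refine ⟨(ix - 1 - i0).val, ?_⟩
      rw [ZMod.natCast_rightInverse (ix - 1 - i0)]
      have : i0 + (ix - 1 - i0) = ix - 1 := by ring
      rw [this]; exact hnPix)
    -- both exits are at b m
    have hbm1 : c (ix + (t1 : ℕ)) = b (m : ℕ) := by
      have h1 : P (ix + ((t1 - 1 : ℕ) : ZMod k)) := ht13 (t1 - 1) (by omega)
      have h2 : (ix + ((t1 - 1 : ℕ) : ZMod k)) + 1 = ix + (t1 : ℕ) := by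
        rw [Nat.cast_sub ht11]
        push_cast
        ring
      have := hexit _ h1 (by rw [h2]; exact ht12)
      rw [h2] at this
      exact this
    have hbm2 : c (i0 + (t2 : ℕ)) = b (m : ℕ) := by
      have h1 : P (i0 + ((t2 - 1 : ℕ) : ZMod k)) := ht23 (t2 - 1) (by omega)
      have h2 : (i0 + ((t2 - 1 : ℕ) : ZMod k)) + 1 = i0 + (t2 : ℕ) := by
        rw [Nat.cast_sub ht21]
        push_cast
        ring
      have := hexit _ h1 (by rw [h2]; exact ht22)
      rw [h2] at this
      exact this
    have heq : ix + (t1 : ZMod k) = i0 + (t2 : ZMod k) := hcinj (by rw [hbm1, hbm2])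
    rcases lt_trichotomy t1 t2 with h | h | h
    · -- t1 < t2 : then ix - 1 lies in the P-segment starting at i0
      have hcast : ((t2 - t1 - 1 : ℕ) : ZMod k) = (t2 : ZMod k) - t1 - 1 := by
        rw [Nat.cast_sub (by omega : 1 ≤ t2 - t1), Nat.cast_sub (by omega : t1 ≤ t2)]
        push_cast; ring
      have hpos : ix - 1 = i0 + ((t2 - t1 - 1 : ℕ) : ZMod k) := by
        rw [hcast]; linear_combination heq
      have := ht23 (t2 - t1 - 1) (by omega)
      rw [← hpos] at this
      exact hnPix this
    · -- t1 = t2 : then ix = i0, contradiction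
      subst h
      have : ix = i0 := by
        have := heq
        exact add_right_cancel this
      rw [this, hi0] at hix
      exact hxb 0 hix.symm
    · -- t2 < t1
      have hcast : ((t1 - t2 - 1 : ℕ) : ZMod k) = (t1 : ZMod k) - t2 - 1 := by
        rw [Nat.cast_sub (by omega : 1 ≤ t1 - t2), Nat.cast_sub (by omega : t2 ≤ t1)]
        push_cast; ring
      have hpos : i0 - 1 = ix + ((t1 - t2 - 1 : ℕ) : ZMod k) := by
        rw [hcast]; linear_combination heq.symm
      have := ht13 (t1 - t2 - 1) (by omega)
      rw [← hpos] at this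
      exact hnPi0 this
  exact ⟨part1, part2, part3, part4⟩
end

section
/- The digraph D_7 is a strong digraph of order 7 in which every vertex has out-degree 3 and in-degree 3 (so every vertex is a T-vertex with m = 3); D_7 contains a cycle of length 6, but D_7 contains no Hamiltonian cycle. -/

instance D7decArc : ∀ a b : Fin 7, Decidable (D7.Arc a b) :=
  fun a b => (inferInstance : Decidable ((a, b) ∈ D7arcs))

lemma D7arc {a b : Fin 7} (h : (a, b) ∈ D7arcs) : D7.Arc a b := h

lemma D7to0 : ∀ v : Fin 7, v ≠ 0 → Relation.TransGen D7.Arc v 0 := by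
  intro v hv
  fin_cases v
  · exact absurd rfl hv
  · exact Relation.TransGen.head (b := 6) (D7arc (by decide)) (.single (D7arc (by decide)))
  · exact Relation.TransGen.head (b := 5) (D7arc (by decide)) (.single (D7arc (by decide)))
  · exact Relation.TransGen.head (b := 5) (D7arc (by decide)) (.single (D7arc (by decide)))
  · exact .single (D7arc (by decide))
  · exact .single (D7arc (by decide))
  · exact .single (D7arc (by decide))

lemma D7from0 : ∀ v : Fin 7, v ≠ 0 → Relation.TransGen D7.Arc 0 v := by
  intro v hv
  fin_cases v
  · exact absurd rfl hv
  · exact .single (D7arc (by decide))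
  · exact Relation.TransGen.head (b := 1) (D7arc (by decide)) (.single (D7arc (by decide)))
  · exact Relation.TransGen.head (b := 1) (D7arc (by decide)) (.single (D7arc (by decide)))
  · exact .single (D7arc (by decide))
  · exact Relation.TransGen.head (b := 4) (D7arc (by decide)) (.single (D7arc (by decide)))
  · exact .single (D7arc (by decide))

lemma D7outDeg (u : Fin 7) : D7.outDeg u = 3 := by
  have h : {v | D7.Arc u v} = ↑(Finset.filter (fun v => (u, v) ∈ D7arcs) Finset.univ) := by
    ext v
    simp only [Finset.coe_filter, Finset.mem_univ, true_and, Set.mem_setOf_eq]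
    exact Iff.rfl
  rw [Dgr.outDeg, h, Set.ncard_coe_finset]
  fin_cases u <;> decide

lemma D7inDeg (u : Fin 7) : D7.inDeg u = 3 := by
  have h : {v | D7.Arc v u} = ↑(Finset.filter (fun v => (v, u) ∈ D7arcs) Finset.univ) := by
    ext v
    simp only [Finset.coe_filter, Finset.mem_univ, true_and, Set.mem_setOf_eq]
    exact Iff.rfl
  rw [Dgr.inDeg, h, Set.ncard_coe_finset]
  fin_cases u <;> decide

/-- Out-neighbour lists of `D₇`. -/
def D7nbrs : Fin 7 → List (Fin 7)
  | 0 => [1, 4, 6] | 1 => [2, 3, 6] | 2 => [1, 3, 5] | 3 => [2, 4, 5]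
  | 4 => [0, 5, 6] | 5 => [0, 1, 2] | 6 => [0, 3, 4]

lemma D7arc_iff (a b : Fin 7) : D7.Arc a b ↔ b ∈ D7nbrs a := by
  revert b; fin_cases a <;> decide

/-- DFS search for a Hamiltonian cycle of `D₇` through `0`: extends a simple
path ending at `v` by `n` more vertices avoiding `visited`, returning `true`
iff no extension closes up into a Hamiltonian cycle. -/
def D7dfs : Nat → Fin 7 → List (Fin 7) → Bool
  | 0, v, _ => !(D7nbrs v).contains 0
  | n + 1, v, visited =>
      (D7nbrs v).all fun w => visited.contains w || D7dfs n w (w :: visited)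

lemma D7dfs_ok : D7dfs 6 0 [0] = true := by rfl

lemma D7dfs_sound : ∀ (n : Nat) (v : Fin 7) (vis l : List (Fin 7)),
    D7dfs n v vis = true → l.length = n → List.Chain D7.Arc v (l ++ [0]) →
    (∀ x ∈ l, x ∉ vis) → l.Nodup → False := by
  intro n
  induction n with
  | zero =>
    intro v vis l h hlen hch hdis hnd
    obtain rfl : l = [] := List.length_eq_zero_iff.mp hlen
    simp only [List.nil_append, List.chain_cons, List.isChain_cons_cons] at hch
    simp only [D7dfs, Bool.not_eq_true'] at h
    exact Bool.false_ne_true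
      (h.symm.trans (List.elem_iff.mpr ((D7arc_iff v 0).mp (List.isChain_cons_cons.mp hch).1)))
  | succ n ih =>
    intro v vis l h hlen hch hdis hnd
    cases l with
    | nil => simp at hlen
    | cons w l' =>
      simp only [List.cons_append, List.chain_cons, List.isChain_cons_cons] at hch
      simp only [D7dfs, List.all_eq_true, Bool.or_eq_true] at h
      rcases h w ((D7arc_iff v w).mp (List.isChain_cons_cons.mp hch).1) with hcont | hdfs
      · exact hdis w List.mem_cons_self (List.elem_iff.mp hcont)
      · refine ih w (w :: vis) l' hdfs (by simpa using hlen) (List.isChain_cons_cons.mp hch).2 ?_ hnd.of_cons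
        intro x hx
        simp only [List.mem_cons, not_or]
        exact ⟨fun hxw => (List.nodup_cons.mp hnd).1 (hxw ▸ hx),
          hdis x (List.mem_cons_of_mem _ hx)⟩

/-- The digraph `D₇` is a strong digraph of order `7` in which every vertex has
out-degree `3` and in-degree `3` (so every vertex is a `T`-vertex with `m = 3`);
it contains a cycle of length `6` but no Hamiltonian cycle. -/
theorem statement15 :
    D7.Strong ∧ Fintype.card (Fin 7) = 7 ∧
    (∀ v : Fin 7, D7.outDeg v = 3 ∧ D7.inDeg v = 3) ∧
    (∀ v : Fin 7, D7.TVertex 3 v) ∧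
    (∃ c : ZMod 6 → Fin 7, D7.IsCycle c) ∧
    ¬ D7.Hamiltonian := by
  refine ⟨?_, rfl, fun v => ⟨D7outDeg v, D7inDeg v⟩,
    fun v => ⟨(D7outDeg v).ge, (D7inDeg v).ge⟩, ?_, ?_⟩
  · intro u v huv
    by_cases hu : u = 0
    · exact hu ▸ D7from0 v (hu ▸ huv.symm)
    · by_cases hv : v = 0
      · exact hv ▸ D7to0 u (hv ▸ huv)
      · exact (D7to0 u hu).trans (D7from0 v hv)
  · refine ⟨fun i : ZMod 6 => (![0, 1, 2, 3, 4, 5] : Fin 6 → Fin 7) i, ?_⟩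
    show 2 ≤ 6 ∧ Function.Injective _ ∧ ∀ i : ZMod 6, D7.Arc _ _
    refine ⟨by norm_num, by decide, by intro i; fin_cases i <;> exact D7arc (by decide)⟩
  · rintro ⟨c₀, hc₀, hsurj₀⟩
    have H : ∃ c : ZMod 7 → Fin 7, Function.Injective c ∧
        (∀ i : ZMod 7, D7.Arc (c i) (c (i + 1))) ∧ Function.Surjective c :=
      ⟨c₀, hc₀.2.1, hc₀.2.2, hsurj₀⟩
    obtain ⟨c, inj, harc, hsurj⟩ := H
    obtain ⟨j, hj⟩ := hsurj 0
    have key : ∀ i k : ZMod 7, i ≠ k → c (j + i) ≠ c (j + k) := by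
      intro i k hik h
      exact hik (add_left_cancel (inj h))
    have h0 : ∀ i : ZMod 7, i ≠ 0 → c (j + i) ≠ 0 := by
      intro i hi
      have := key i 0 hi
      rwa [add_zero, hj] at this
    have step : ∀ i : ZMod 7, D7.Arc (c (j + i)) (c (j + i + 1)) :=
      fun i => harc (j + i)
    have stepn : ∀ i i' : ZMod 7, i + 1 = i' → D7.Arc (c (j + i)) (c (j + i')) := by
      intro i i' h
      have := step i
      rwa [add_assoc, h] at this
    have first : D7.Arc 0 (c (j + 1)) := by
      have := harc j
      rwa [hj] at this
    have last : D7.Arc (c (j + 6)) 0 := by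
      have := step 6
      rwa [add_assoc, show (6 : ZMod 7) + 1 = 0 from by decide, add_zero, hj] at this
    have hch : List.Chain D7.Arc 0
        ([c (j+1), c (j+2), c (j+3), c (j+4), c (j+5), c (j+6)] ++ [0]) := by
      simp only [List.cons_append, List.nil_append]
      exact List.Chain.cons first (List.Chain.cons (stepn 1 2 (by decide))
        (List.Chain.cons (stepn 2 3 (by decide)) (List.Chain.cons (stepn 3 4 (by decide))
        (List.Chain.cons (stepn 4 5 (by decide)) (List.Chain.cons (stepn 5 6 (by decide))
        (List.Chain.cons last List.Chain.nil))))))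
    have hdis : ∀ x ∈ [c (j+1), c (j+2), c (j+3), c (j+4), c (j+5), c (j+6)],
        x ∉ [(0 : Fin 7)] := by
      intro x hx hmem
      have hx0 : x = 0 := List.mem_singleton.mp hmem
      simp only [List.mem_cons, List.not_mem_nil, or_false] at hx
      rcases hx with rfl | rfl | rfl | rfl | rfl | rfl
      · exact h0 1 (by decide) hx0
      · exact h0 2 (by decide) hx0
      · exact h0 3 (by decide) hx0
      · exact h0 4 (by decide) hx0
      · exact h0 5 (by decide) hx0
      · exact h0 6 (by decide) hx0
    have hnd : [c (j+1), c (j+2), c (j+3), c (j+4), c (j+5), c (j+6)].Nodup := by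
      simp only [List.nodup_cons, List.mem_cons, List.not_mem_nil, or_false,
        List.nodup_nil, and_true, not_or]
      and_intros <;> first | trivial | exact key _ _ (by decide)
    exact D7dfs_sound 6 0 [0] [c (j+1), c (j+2), c (j+3), c (j+4), c (j+5), c (j+6)]
      D7dfs_ok rfl hch hdis hnd
end

section
/- The digraph D_5 and each of the three digraphs in L_1 is a strong digraph of order 5 in which every vertex has out-degree at least 2 and in-degree at least 2 (so every vertex is a T-vertex with m = 2), and each contains a cycle of length 4; yet none of these four digraphs contains a Hamiltonian cycle. -/
set_option synthInstance.maxSize 512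
set_option synthInstance.maxHeartbeats 400000


section Aux

variable {V : Type*}

instance ofList.decArc [DecidableEq V] (l : List (V × V)) (h : ∀ v : V, (v, v) ∉ l) :
    DecidableRel (ofList l h).Arc :=
  fun a b => inferInstanceAs (Decidable ((a, b) ∈ l))

/-- Bounded reachability: `reachN r n u v` means a path of at most `n+1` arcs. -/
def reachN (r : V → V → Prop) : ℕ → V → V → Prop
  | 0, u, v => r u v
  | n + 1, u, v => r u v ∨ ∃ w, r u w ∧ reachN r n w v

theorem reachN_transGen {r : V → V → Prop} :
    ∀ {n : ℕ} {u v : V}, reachN r n u v → Relation.TransGen r u v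
  | 0, _, _, h => .single h
  | n + 1, _, _, h => by
    rcases h with h | ⟨w, hw, hr⟩
    · exact .single h
    · exact .head hw (reachN_transGen hr)

def reachN.dec {r : V → V → Prop} [DecidableRel r] [Fintype V] [DecidableEq V] :
    ∀ n, DecidableRel (reachN r n)
  | 0 => fun u v => inferInstanceAs (Decidable (r u v))
  | n + 1 => fun u v =>
    haveI : DecidableRel (reachN r n) := reachN.dec n
    inferInstanceAs (Decidable (r u v ∨ ∃ w, r u w ∧ reachN r n w v))

attribute [instance] reachN.dec

theorem ncard_filter [Fintype V] (p : V → Prop) [DecidablePred p] :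
    {v | p v}.ncard = (Finset.univ.filter p).card := by
  rw [Set.ncard_eq_toFinset_card']
  simp [Set.toFinset_setOf]

theorem outDeg_eq [Fintype V] (D : Dgr V) [DecidableRel D.Arc] (u : V) :
    D.outDeg u = (Finset.univ.filter (fun v => D.Arc u v)).card := ncard_filter _

theorem inDeg_eq [Fintype V] (D : Dgr V) [DecidableRel D.Arc] (u : V) :
    D.inDeg u = (Finset.univ.filter (fun v => D.Arc v u)).card := ncard_filter _

theorem noHam5 (l : List (Fin 5 × Fin 5)) (h : ∀ v : Fin 5, (v, v) ∉ l)
    (key : ¬ ∃ a b d e : Fin 5,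
      (a ≠ 0 ∧ b ≠ 0 ∧ d ≠ 0 ∧ e ≠ 0 ∧ a ≠ b ∧ a ≠ d ∧ a ≠ e ∧ b ≠ d ∧ b ≠ e ∧ d ≠ e) ∧
      ((((0 : Fin 5), a) ∈ l) ∧ ((a, b) ∈ l) ∧ ((b, d) ∈ l) ∧ ((d, e) ∈ l) ∧
        ((e, (0 : Fin 5)) ∈ l))) :
    ¬ (ofList l h).Hamiltonian := by
  intro hH
  have hH' : ∃ c : ZMod 5 → Fin 5,
      (2 ≤ 5 ∧ Function.Injective c ∧ ∀ i, (ofList l h).Arc (c i) (c (i + 1))) ∧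
      Function.Surjective c := hH
  obtain ⟨c, ⟨-, hinj, harc⟩, hsurj⟩ := hH'
  obtain ⟨j, hj⟩ := hsurj 0
  have hne : ∀ k k' : ZMod 5, k ≠ k' → c (j + k) ≠ c (j + k') := by
    intro k k' hk hc
    exact hk (add_left_cancel (hinj hc))
  have hj0 : c (j + 0) = 0 := by rw [add_zero, hj]
  have hne0 : ∀ k : ZMod 5, k ≠ 0 → c (j + k) ≠ 0 := fun k hk hc =>
    hne k 0 hk (hc.trans hj0.symm)
  have harc' : ∀ k k' : ZMod 5, k + 1 = k' → (ofList l h).Arc (c (j + k)) (c (j + k')) := by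
    intro k k' hk
    have := harc (j + k)
    rwa [add_assoc, hk] at this
  have A0 : (ofList l h).Arc 0 (c (j + 1)) := by
    have := harc' 0 1 (by decide); rwa [hj0] at this
  have A4 : (ofList l h).Arc (c (j + 4)) 0 := by
    have := harc' 4 0 (by decide); rwa [hj0] at this
  exact key ⟨c (j + 1), c (j + 2), c (j + 3), c (j + 4),
    ⟨hne0 1 (by decide), hne0 2 (by decide), hne0 3 (by decide), hne0 4 (by decide),
     hne 1 2 (by decide), hne 1 3 (by decide), hne 1 4 (by decide),
     hne 2 3 (by decide), hne 2 4 (by decide), hne 3 4 (by decide)⟩,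
    A0, harc' 1 2 (by decide), harc' 2 3 (by decide), harc' 3 4 (by decide), A4⟩

end Aux

/-- The digraph `D₅` and each of the three digraphs in `L₁` is a strong digraph of
order `5` in which every vertex has out-degree `≥ 2` and in-degree `≥ 2` (so every
vertex is a `T`-vertex with `m = 2`), and each contains a cycle of length `4`; yet
none of them has a Hamiltonian cycle. -/
theorem statement16 :
    ∀ E ∈ insert D5 L1,
      E.Strong ∧ Fintype.card (Fin 5) = 5 ∧
      (∀ v : Fin 5, 2 ≤ E.outDeg v ∧ 2 ≤ E.inDeg v) ∧
      (∀ v : Fin 5, E.TVertex 2 v) ∧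
      (∃ c : ZMod 4 → Fin 5, E.IsCycle c) ∧
      ¬ E.Hamiltonian := by
  intro E hE
  simp only [Set.mem_insert_iff, L1, Set.mem_singleton_iff, D5] at hE
  rcases hE with h | h | h | h <;> subst h <;>
    exact ⟨fun u v huv => reachN_transGen (n := 3) (by revert huv; revert u v; decide),
      rfl,
      by simp only [outDeg_eq, inDeg_eq]; decide,
      by simp only [Dgr.TVertex, outDeg_eq, inDeg_eq]; decide,
      ⟨fun i : ZMod 4 => ![0, 1, 2, 3] i, by refine ⟨by norm_num, ?_, ?_⟩ <;> decide⟩,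
      noHam5 _ _ (by decide)⟩
end
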